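/- Define f(n) = (2n+1) + Σ_{i=1}^{n} (−1)^i (2n+1−2i) [C(2n,i)/2^i + C(2n,i−1)/(4·2^{i−1})]. Then f(2m) < 0 for all integers m ≥ 2. -/

import Mathlib

open Finset

/-- `f(n) = (2n+1) + Σ_{i=1}^{n} (−1)^i (2n+1−2i) [C(2n,i)/2^i + C(2n,i−1)/(4·2^{i−1})]`. -/
noncomputable def fSeq4 (n : ℕ) : ℝ :=
  (2 * n + 1 : ℝ) +
    ∑ i ∈ Icc 1 n, (-1 : ℝ) ^ i * ((2 * n + 1 : ℝ) - 2 * i) *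
      ((Nat.choose (2 * n) i : ℝ) / 2 ^ i +
        (Nat.choose (2 * n) (i - 1) : ℝ) / (4 * 2 ^ (i - 1)))

set_option maxHeartbeats 4000000

noncomputable def gC (r x : ℝ) : ℝ :=
  (x*(53900+739940*r+3621856*r^2+8237440*r^3+9394176*r^4+5194752*r^5+1105920*r^6)
   - x^2*(59505+642788*r+2441600*r^2+4133248*r^3+3170048*r^4+893952*r^5)
   + x^3*(30463+230108*r+586592*r^2+607552*r^3+218880*r^4)
   - x^4*(8897+43236*r+63248*r^2+28224*r^3)
   + x^5*(1353+3648*r+2160*r^2)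
   - x^6*(82+72*r)) /
  ((36*r+41)*(4*r+1-x)*(4*r+2-x)*(4*r+3-x)*(4*r+4-x)*(4*r+5-x))


lemma cert_abs (r x b s t : ℝ) (ht : t ≠ 0)
    (d0 : 4*r - x ≠ 0) (d1 : 4*r+1-x ≠ 0) (d2 : 4*r+2-x ≠ 0) (d3 : 4*r+3-x ≠ 0)
    (d4 : 4*r+4-x ≠ 0) (d5 : 4*r+5-x ≠ 0) (dx : x+1 ≠ 0) (dl : 36*r+41 ≠ 0) :
    s*(4*r+1-2*x) * (b/t + (b*x/(4*r+1-x))/(2*t))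
      + (-(16*(36*r+5))/(36*r+41)) * (s*(4*r+5-2*x) *
          ((b*(4*r+1)*(4*r+2)*(4*r+3)*(4*r+4)/((4*r+1-x)*(4*r+2-x)*(4*r+3-x)*(4*r+4-x)))/t
           + ((b*(4*r+1)*(4*r+2)*(4*r+3)*(4*r+4)/((4*r+1-x)*(4*r+2-x)*(4*r+3-x)*(4*r+4-x)))*x/(4*r+5-x))/(2*t)))
    = (-s) * (b*(4*r-x)/(x+1)) / (2*t) * gC r (x+1) - s * b / t * gC r x := by
  unfold gC
  have e0 : 4*r+1-(x+1) ≠ 0 := by rw [show 4*r+1-(x+1) = 4*r-x from by ring]; exact d0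
  have e1 : 4*r+2-(x+1) ≠ 0 := by rw [show 4*r+2-(x+1) = 4*r+1-x from by ring]; exact d1
  have e2 : 4*r+3-(x+1) ≠ 0 := by rw [show 4*r+3-(x+1) = 4*r+2-x from by ring]; exact d2
  have e3 : 4*r+4-(x+1) ≠ 0 := by rw [show 4*r+4-(x+1) = 4*r+3-x from by ring]; exact d3
  have e4 : 4*r+5-(x+1) ≠ 0 := by rw [show 4*r+5-(x+1) = 4*r+4-x from by ring]; exact d4
  have d4' : 4*(r+1)-x ≠ 0 := by rw [show 4*(r+1)-x = 4*r+4-x from by ring]; exact d4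
  have e3' : 4*(r+1)-(x+1) ≠ 0 := by rw [show 4*(r+1)-(x+1) = 4*r+3-x from by ring]; exact d3
  have dl' : r*36+41 ≠ 0 := by rw [show r*36+41 = 36*r+41 from by ring]; exact dl
  field_simp
  ring

noncomputable def Tm (m i : ℕ) : ℝ :=
  (-1)^i * ((4*m+1 : ℝ) - 2*i) *
    ((Nat.choose (4*m) i : ℝ)/2^i + (Nat.choose (4*m) (i-1) : ℝ)/(4*2^(i-1)))
noncomputable def Tm' (m i : ℕ) : ℝ :=
  (-1)^i * ((4*m+5 : ℝ) - 2*i) *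
    ((Nat.choose (4*m+4) i : ℝ)/2^i + (Nat.choose (4*m+4) (i-1) : ℝ)/(4*2^(i-1)))
noncomputable def Gm (m i : ℕ) : ℝ :=
  (-1)^i * (Nat.choose (4*m) i : ℝ)/2^i * gC m i

noncomputable def lamR (m : ℕ) : ℝ := -(16*(36*(m:ℝ)+5))/(36*(m:ℝ)+41)



lemma pt (m k : ℕ) (hm : 1 ≤ m) (hk : k + 1 ≤ 2*m) :
    Tm m (k+1) + lamR m * Tm' m (k+1) = Gm m (k+2) - Gm m (k+1) := by
  have hkm : (k:ℝ) + 1 ≤ 2*(m:ℝ) := by exact_mod_cast hk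
  have hrm : (1:ℝ) ≤ (m:ℝ) := by exact_mod_cast hm
  have d0 : 4*(m:ℝ) - ((k:ℝ)+1) ≠ 0 := by nlinarith
  have d1 : 4*(m:ℝ)+1-((k:ℝ)+1) ≠ 0 := by nlinarith
  have d2 : 4*(m:ℝ)+2-((k:ℝ)+1) ≠ 0 := by nlinarith
  have d3 : 4*(m:ℝ)+3-((k:ℝ)+1) ≠ 0 := by nlinarith
  have d4 : 4*(m:ℝ)+4-((k:ℝ)+1) ≠ 0 := by nlinarith
  have d5 : 4*(m:ℝ)+5-((k:ℝ)+1) ≠ 0 := by nlinarith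
  have dx : ((k:ℝ)+1)+1 ≠ 0 := by positivity
  have dl : 36*(m:ℝ)+41 ≠ 0 := by positivity
  have ht : (2:ℝ)^(k+1) ≠ 0 := by positivity
  have hk4 : k ≤ 4*m := by omega
  have E1 : (Nat.choose (4*m) k : ℝ) = (Nat.choose (4*m) (k+1) : ℝ) * ((k:ℝ)+1) / (4*(m:ℝ)+1-((k:ℝ)+1)) := by
    rw [eq_div_iff d1]
    have h := congrArg (Nat.cast (R:=ℝ)) (Nat.choose_succ_right_eq (4*m) k)
    push_cast [Nat.cast_sub hk4] at h
    linarith [h]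
  have E2 : (Nat.choose (4*m) (k+2) : ℝ) = (Nat.choose (4*m) (k+1) : ℝ) * (4*(m:ℝ)-((k:ℝ)+1)) / (((k:ℝ)+1)+1) := by
    rw [eq_div_iff dx]
    have h := congrArg (Nat.cast (R:=ℝ)) (Nat.choose_succ_right_eq (4*m) (k+1))
    rw [show 4*m - (k+1) = 4*m-k-1 by omega] at h
    push_cast [Nat.cast_sub (by omega : 1 ≤ 4*m - k), Nat.cast_sub hk4] at h
    linarith [h]
  have S1 : (Nat.choose (4*m+1) (k+1) : ℝ) = (Nat.choose (4*m) (k+1) : ℝ) * (4*(m:ℝ)+1) / (4*(m:ℝ)+1-((k:ℝ)+1)) := by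
    rw [eq_div_iff d1]
    have h := congrArg (Nat.cast (R:=ℝ)) (Nat.choose_mul_succ_eq (4*m) (k+1))
    rw [show 4*m+1 - (k+1) = 4*m-k by omega] at h
    push_cast [Nat.cast_sub hk4] at h
    linarith [h]
  have S2 : (Nat.choose (4*m+2) (k+1) : ℝ) = (Nat.choose (4*m+1) (k+1) : ℝ) * (4*(m:ℝ)+2) / (4*(m:ℝ)+2-((k:ℝ)+1)) := by
    rw [eq_div_iff d2]
    have h := congrArg (Nat.cast (R:=ℝ)) (Nat.choose_mul_succ_eq (4*m+1) (k+1))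
    rw [show 4*m+1+1 = 4*m+2 by omega, show 4*m+2 - (k+1) = 4*m+1-k by omega] at h
    push_cast [Nat.cast_sub (by omega : k ≤ 4*m+1)] at h
    linarith [h]
  have S3 : (Nat.choose (4*m+3) (k+1) : ℝ) = (Nat.choose (4*m+2) (k+1) : ℝ) * (4*(m:ℝ)+3) / (4*(m:ℝ)+3-((k:ℝ)+1)) := by
    rw [eq_div_iff d3]
    have h := congrArg (Nat.cast (R:=ℝ)) (Nat.choose_mul_succ_eq (4*m+2) (k+1))
    rw [show 4*m+2+1 = 4*m+3 by omega, show 4*m+3 - (k+1) = 4*m+2-k by omega] at h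
    push_cast [Nat.cast_sub (by omega : k ≤ 4*m+2)] at h
    linarith [h]
  have S4 : (Nat.choose (4*m+4) (k+1) : ℝ) = (Nat.choose (4*m+3) (k+1) : ℝ) * (4*(m:ℝ)+4) / (4*(m:ℝ)+4-((k:ℝ)+1)) := by
    rw [eq_div_iff d4]
    have h := congrArg (Nat.cast (R:=ℝ)) (Nat.choose_mul_succ_eq (4*m+3) (k+1))
    rw [show 4*m+3+1 = 4*m+4 by omega, show 4*m+4 - (k+1) = 4*m+3-k by omega] at h
    push_cast [Nat.cast_sub (by omega : k ≤ 4*m+3)] at h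
    linarith [h]
  have H3 : (Nat.choose (4*m+4) (k+1) : ℝ) =
      (Nat.choose (4*m) (k+1) : ℝ)*(4*(m:ℝ)+1)*(4*(m:ℝ)+2)*(4*(m:ℝ)+3)*(4*(m:ℝ)+4)
        /((4*(m:ℝ)+1-((k:ℝ)+1))*(4*(m:ℝ)+2-((k:ℝ)+1))*(4*(m:ℝ)+3-((k:ℝ)+1))*(4*(m:ℝ)+4-((k:ℝ)+1))) := by
    rw [S4, S3, S2, S1]; field_simp; try ring
  have H4 : (Nat.choose (4*m+4) k : ℝ) =
      ((Nat.choose (4*m) (k+1) : ℝ)*(4*(m:ℝ)+1)*(4*(m:ℝ)+2)*(4*(m:ℝ)+3)*(4*(m:ℝ)+4)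
        /((4*(m:ℝ)+1-((k:ℝ)+1))*(4*(m:ℝ)+2-((k:ℝ)+1))*(4*(m:ℝ)+3-((k:ℝ)+1))*(4*(m:ℝ)+4-((k:ℝ)+1))))*((k:ℝ)+1)/(4*(m:ℝ)+5-((k:ℝ)+1)) := by
    rw [← H3, eq_div_iff d5]
    have h := congrArg (Nat.cast (R:=ℝ)) (Nat.choose_succ_right_eq (4*m+4) k)
    rw [show 4*m+4 - k = 4*m-k+4 by omega] at h
    push_cast [Nat.cast_sub hk4] at h
    linarith [h]
  have hmain := cert_abs (m:ℝ) ((k:ℝ)+1) (Nat.choose (4*m) (k+1) : ℝ) ((-1:ℝ)^(k+1)) ((2:ℝ)^(k+1))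
    ht d0 d1 d2 d3 d4 d5 dx dl
  unfold Tm Tm' Gm lamR
  simp only [Nat.add_sub_cancel]
  rw [E1, E2, H4, H3]
  push_cast
  rw [show ((-1:ℝ))^(k+2) = -((-1:ℝ))^(k+1) by rw [pow_succ]; ring,
      show ((2:ℝ))^(k+2) = 2*((2:ℝ))^(k+1) by rw [pow_succ]; ring,
      show (4:ℝ)*2^k = 2*((2:ℝ))^(k+1) by rw [pow_succ]; ring]
  rw [show ((k:ℝ)+1+1) = ((k:ℝ)+2) from by ring] at hmain
  linear_combination hmain

lemma fSeq4_even (m : ℕ) : fSeq4 (2*m) = (4*(m:ℝ)+1) + ∑ i ∈ Icc 1 (2*m), Tm m i := by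
  unfold fSeq4 Tm
  simp only [show 2*(2*m) = 4*m from by ring]
  push_cast
  congr 1
  · ring
  · exact Finset.sum_congr rfl (fun i _ => by ring)

lemma fSeq4_even' (m : ℕ) : fSeq4 (2*m+2) = (4*(m:ℝ)+5) + ∑ i ∈ Icc 1 (2*m+2), Tm' m i := by
  unfold fSeq4 Tm'
  simp only [show 2*(2*m+2) = 4*m+4 from by ring]
  push_cast
  congr 1
  · ring
  · exact Finset.sum_congr rfl (fun i _ => by ring)

lemma tele (m : ℕ) (hm : 1 ≤ m) :
    ∑ i ∈ Icc 1 (2*m), (Tm m i + lamR m * Tm' m i) = Gm m (2*m+1) - Gm m 1 := by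
  rw [show Icc 1 (2*m) = Ico 1 (2*m+1) from (Finset.Ico_add_one_right_eq_Icc 1 (2*m)).symm]
  rw [Finset.sum_Ico_eq_sum_range]
  simp only [show 2*m+1-1 = 2*m from rfl]
  have hcong : ∀ k ∈ range (2*m),
      (Tm m (1+k) + lamR m * Tm' m (1+k)) = Gm m ((k+1)+1) - Gm m (k+1) := by
    intro k hk
    rw [Nat.add_comm 1 k]
    exact pt m k hm (by simpa using (mem_range.mp hk))
  rw [Finset.sum_congr rfl hcong]
  exact Finset.sum_range_sub (fun k => Gm m (k+1)) (2*m)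

lemma recur (m : ℕ) (hm : 1 ≤ m) :
    fSeq4 (2*m+2) = (36*(m:ℝ)+41)/(16*(36*(m:ℝ)+5)) * fSeq4 (2*m)
      - (3*(252*(m:ℝ)^3+435*(m:ℝ)^2+97*(m:ℝ)+7)
          /(16*(2*(m:ℝ)+1)*((m:ℝ)+1)*(36*(m:ℝ)+5)))
        * (Nat.choose (4*m) (2*m) : ℝ) / 4^m := by
  have hrm : (1:ℝ) ≤ (m:ℝ) := by exact_mod_cast hm
  have hu : (2:ℝ)^(2*m) ≠ 0 := by positivity
  have hodd : (-1:ℝ)^(2*m+1) = -1 := Odd.neg_one_pow ⟨m, by ring⟩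
  have heven : (-1:ℝ)^(2*m+2) = 1 := Even.neg_one_pow ⟨m+1, by ring⟩
  have hpow1 : (2:ℝ)^(2*m+1) = 2*2^(2*m) := by rw [pow_add]; ring
  have hpow2 : (2:ℝ)^(2*m+2) = 4*2^(2*m) := by rw [pow_add]; norm_num; ring
  -- split the top of the sum
  have hsplit : fSeq4 (2*m+2)
      = (4*(m:ℝ)+5) + (∑ i ∈ Icc 1 (2*m), Tm' m i) + Tm' m (2*m+1) + Tm' m (2*m+2) := by
    rw [fSeq4_even' m, show 2*m+2 = (2*m+1)+1 from by omega]
    rw [Finset.sum_Icc_succ_top (by omega : 1 ≤ (2*m+1)+1)]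
    rw [Finset.sum_Icc_succ_top (by omega : 1 ≤ 2*m+1)]
    rw [show (2*m+1)+1 = 2*m+2 from by omega]
    ring
  have htele := tele m hm
  rw [Finset.sum_add_distrib, ← Finset.mul_sum] at htele
  have hS : ∑ i ∈ Icc 1 (2*m), Tm m i
      = Gm m (2*m+1) - Gm m 1 - lamR m * ∑ i ∈ Icc 1 (2*m), Tm' m i := by linarith
  -- boundary values
  have hG1 : Gm m (2*m+1)
      = -((Nat.choose (4*m) (2*m+1) : ℝ) / (2*2^(2*m)) * gC (m:ℝ) (2*(m:ℝ)+1)) := by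
    unfold Gm
    rw [hodd, hpow1]
    push_cast
    ring
  have hG0 : Gm m 1 = -(2*(m:ℝ) * gC (m:ℝ) 1) := by
    unfold Gm
    rw [Nat.choose_one_right]
    push_cast
    norm_num
    ring
  have hT1 : Tm' m (2*m+1)
      = -3*((Nat.choose (4*m+4) (2*m+1) : ℝ)/(2*2^(2*m))
            + (Nat.choose (4*m+4) (2*m) : ℝ)/(4*2^(2*m))) := by
    unfold Tm'
    simp only [Nat.add_sub_cancel]
    rw [hodd, hpow1]
    push_cast
    ring
  have hT2 : Tm' m (2*m+2)
      = (Nat.choose (4*m+4) (2*m+2) : ℝ)/(4*2^(2*m))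
        + (Nat.choose (4*m+4) (2*m+1) : ℝ)/(8*2^(2*m)) := by
    unfold Tm'
    simp only [show 2*m+2-1 = 2*m+1 from by omega]
    rw [heven, hpow2, hpow1]
    push_cast
    ring
  -- choose relations
  have hd1 : (2*(m:ℝ)+1) ≠ 0 := by positivity
  have hd2 : (2*(m:ℝ)+2) ≠ 0 := by positivity
  have hc21 : (Nat.choose (4*m) (2*m+1) : ℝ)
      = (Nat.choose (4*m) (2*m) : ℝ) * (2*(m:ℝ)) / (2*(m:ℝ)+1) := by
    rw [eq_div_iff hd1]
    have h := congrArg (Nat.cast (R:=ℝ)) (Nat.choose_succ_right_eq (4*m) (2*m))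
    rw [show 4*m - 2*m = 2*m from by omega] at h
    push_cast at h
    linarith
  have q1 : (Nat.choose (4*m+1) (2*m) : ℝ) * (2*(m:ℝ)+1) = (Nat.choose (4*m) (2*m) : ℝ) * (4*(m:ℝ)+1) := by
    have h := congrArg (Nat.cast (R:=ℝ)) (Nat.choose_mul_succ_eq (4*m) (2*m))
    rw [show 4*m+1 - 2*m = 2*m+1 from by omega] at h
    push_cast at h
    linarith
  have q2 : (Nat.choose (4*m+2) (2*m) : ℝ) * (2*(m:ℝ)+2) = (Nat.choose (4*m+1) (2*m) : ℝ) * (4*(m:ℝ)+2) := by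
    have h := congrArg (Nat.cast (R:=ℝ)) (Nat.choose_mul_succ_eq (4*m+1) (2*m))
    rw [show 4*m+1+1 = 4*m+2 from by omega, show 4*m+2 - 2*m = 2*m+2 from by omega] at h
    push_cast at h
    linarith
  have q3 : (Nat.choose (4*m+3) (2*m) : ℝ) * (2*(m:ℝ)+3) = (Nat.choose (4*m+2) (2*m) : ℝ) * (4*(m:ℝ)+3) := by
    have h := congrArg (Nat.cast (R:=ℝ)) (Nat.choose_mul_succ_eq (4*m+2) (2*m))
    rw [show 4*m+2+1 = 4*m+3 from by omega, show 4*m+3 - 2*m = 2*m+3 from by omega] at h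
    push_cast at h
    linarith
  have q4 : (Nat.choose (4*m+4) (2*m) : ℝ) * (2*(m:ℝ)+4) = (Nat.choose (4*m+3) (2*m) : ℝ) * (4*(m:ℝ)+4) := by
    have h := congrArg (Nat.cast (R:=ℝ)) (Nat.choose_mul_succ_eq (4*m+3) (2*m))
    rw [show 4*m+3+1 = 4*m+4 from by omega, show 4*m+4 - 2*m = 2*m+4 from by omega] at h
    push_cast at h
    linarith
  have hd3 : (2*(m:ℝ)+3) ≠ 0 := by positivity
  have hd4 : (2*(m:ℝ)+4) ≠ 0 := by positivity
  have w1 : (Nat.choose (4*m+1) (2*m) : ℝ) = (Nat.choose (4*m) (2*m) : ℝ)*(4*(m:ℝ)+1)/(2*(m:ℝ)+1) := by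
    rw [eq_div_iff hd1]; linarith [q1]
  have w2 : (Nat.choose (4*m+2) (2*m) : ℝ) = (Nat.choose (4*m+1) (2*m) : ℝ)*(4*(m:ℝ)+2)/(2*(m:ℝ)+2) := by
    rw [eq_div_iff hd2]; linarith [q2]
  have w3 : (Nat.choose (4*m+3) (2*m) : ℝ) = (Nat.choose (4*m+2) (2*m) : ℝ)*(4*(m:ℝ)+3)/(2*(m:ℝ)+3) := by
    rw [eq_div_iff hd3]; linarith [q3]
  have w4 : (Nat.choose (4*m+4) (2*m) : ℝ) = (Nat.choose (4*m+3) (2*m) : ℝ)*(4*(m:ℝ)+4)/(2*(m:ℝ)+4) := by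
    rw [eq_div_iff hd4]; linarith [q4]
  have hc40 : (Nat.choose (4*m+4) (2*m) : ℝ)
      = (Nat.choose (4*m) (2*m) : ℝ)*(4*(m:ℝ)+1)*(4*(m:ℝ)+2)*(4*(m:ℝ)+3)*(4*(m:ℝ)+4)
        /((2*(m:ℝ)+1)*(2*(m:ℝ)+2)*(2*(m:ℝ)+3)*(2*(m:ℝ)+4)) := by
    rw [w4, w3, w2, w1]; field_simp; try ring
  have hc41 : (Nat.choose (4*m+4) (2*m+1) : ℝ)
      = (Nat.choose (4*m+4) (2*m) : ℝ) * (2*(m:ℝ)+4) / (2*(m:ℝ)+1) := by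
    rw [eq_div_iff hd1]
    have h := congrArg (Nat.cast (R:=ℝ)) (Nat.choose_succ_right_eq (4*m+4) (2*m))
    rw [show 4*m+4 - 2*m = 2*m+4 from by omega] at h
    push_cast at h
    linarith
  have hc42 : (Nat.choose (4*m+4) (2*m+2) : ℝ)
      = (Nat.choose (4*m+4) (2*m+1) : ℝ) * (2*(m:ℝ)+3) / (2*(m:ℝ)+2) := by
    rw [eq_div_iff hd2]
    have h := congrArg (Nat.cast (R:=ℝ)) (Nat.choose_succ_right_eq (4*m+4) (2*m+1))
    rw [show 4*m+4 - (2*m+1) = 2*m+3 from by omega, show 2*m+1+1 = 2*m+2 from by omega] at h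
    push_cast at h
    linarith
  -- assemble
  rw [hsplit, fSeq4_even m, hS, hG1, hG0, hT1, hT2, hc42, hc41, hc40, hc21,
      show ((4:ℝ))^m = 2^(2*m) from by rw [pow_mul]; norm_num]
  have hgc1 : gC (m:ℝ) (2*(m:ℝ)+1)
      = ((2*(m:ℝ)+1)*(53900+739940*(m:ℝ)+3621856*(m:ℝ)^2+8237440*(m:ℝ)^3+9394176*(m:ℝ)^4+5194752*(m:ℝ)^5+1105920*(m:ℝ)^6)
         - (2*(m:ℝ)+1)^2*(59505+642788*(m:ℝ)+2441600*(m:ℝ)^2+4133248*(m:ℝ)^3+3170048*(m:ℝ)^4+893952*(m:ℝ)^5)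
         + (2*(m:ℝ)+1)^3*(30463+230108*(m:ℝ)+586592*(m:ℝ)^2+607552*(m:ℝ)^3+218880*(m:ℝ)^4)
         - (2*(m:ℝ)+1)^4*(8897+43236*(m:ℝ)+63248*(m:ℝ)^2+28224*(m:ℝ)^3)
         + (2*(m:ℝ)+1)^5*(1353+3648*(m:ℝ)+2160*(m:ℝ)^2)
         - (2*(m:ℝ)+1)^6*(82+72*(m:ℝ)))
        /((36*(m:ℝ)+41)*(2*(m:ℝ))*(2*(m:ℝ)+1)*(2*(m:ℝ)+2)*(2*(m:ℝ)+3)*(2*(m:ℝ)+4)) := by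
    unfold gC
    rw [show 4*(m:ℝ)+1-(2*(m:ℝ)+1) = 2*(m:ℝ) from by ring,
        show 4*(m:ℝ)+2-(2*(m:ℝ)+1) = 2*(m:ℝ)+1 from by ring,
        show 4*(m:ℝ)+3-(2*(m:ℝ)+1) = 2*(m:ℝ)+2 from by ring,
        show 4*(m:ℝ)+4-(2*(m:ℝ)+1) = 2*(m:ℝ)+3 from by ring,
        show 4*(m:ℝ)+5-(2*(m:ℝ)+1) = 2*(m:ℝ)+4 from by ring]
  have hgc0 : gC (m:ℝ) 1
      = ((53900+739940*(m:ℝ)+3621856*(m:ℝ)^2+8237440*(m:ℝ)^3+9394176*(m:ℝ)^4+5194752*(m:ℝ)^5+1105920*(m:ℝ)^6)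
         - (59505+642788*(m:ℝ)+2441600*(m:ℝ)^2+4133248*(m:ℝ)^3+3170048*(m:ℝ)^4+893952*(m:ℝ)^5)
         + (30463+230108*(m:ℝ)+586592*(m:ℝ)^2+607552*(m:ℝ)^3+218880*(m:ℝ)^4)
         - (8897+43236*(m:ℝ)+63248*(m:ℝ)^2+28224*(m:ℝ)^3)
         + (1353+3648*(m:ℝ)+2160*(m:ℝ)^2)
         - (82+72*(m:ℝ)))
        /((36*(m:ℝ)+41)*(4*(m:ℝ))*(4*(m:ℝ)+1)*(4*(m:ℝ)+2)*(4*(m:ℝ)+3)*(4*(m:ℝ)+4)) := by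
    unfold gC
    rw [show 4*(m:ℝ)+1-(1:ℝ) = 4*(m:ℝ) from by ring,
        show 4*(m:ℝ)+2-(1:ℝ) = 4*(m:ℝ)+1 from by ring,
        show 4*(m:ℝ)+3-(1:ℝ) = 4*(m:ℝ)+2 from by ring,
        show 4*(m:ℝ)+4-(1:ℝ) = 4*(m:ℝ)+3 from by ring,
        show 4*(m:ℝ)+5-(1:ℝ) = 4*(m:ℝ)+4 from by ring]
    norm_num
  rw [hgc1, hgc0]
  unfold lamR
  have z1 : (2:ℝ)*(m:ℝ) ≠ 0 := by positivity
  have z2 : (4:ℝ)*(m:ℝ) ≠ 0 := by positivity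
  have z3 : 4*(m:ℝ)+1 ≠ 0 := by positivity
  have z4 : 4*(m:ℝ)+2 ≠ 0 := by positivity
  have z5 : 4*(m:ℝ)+3 ≠ 0 := by positivity
  have z6 : 4*(m:ℝ)+4 ≠ 0 := by positivity
  have dl : 36*(m:ℝ)+41 ≠ 0 := by positivity
  have dl2 : 36*(m:ℝ)+5 ≠ 0 := by positivity
  have hm1 : ((m:ℝ)+1) ≠ 0 := by positivity
  field_simp
  ring

lemma base4 : fSeq4 4 < 0 := by
  unfold fSeq4
  rw [show Icc (1:ℕ) 4 = {1,2,3,4} from rfl]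
  rw [Finset.sum_insert (by decide), Finset.sum_insert (by decide),
      Finset.sum_insert (by decide), Finset.sum_singleton]
  norm_num [show Nat.choose 8 1 = 8 from rfl, show Nat.choose 8 2 = 28 from rfl,
    show Nat.choose 8 3 = 56 from rfl, show Nat.choose 8 4 = 70 from rfl,
    show Nat.choose 8 0 = 1 from rfl]

/-- `f(2m) < 0` for all integers `m ≥ 2`. -/
theorem stmt_17 (m : ℕ) (hm : 2 ≤ m) : fSeq4 (2 * m) < 0 := by
  induction m, hm using Nat.le_induction with
  | base => exact base4
  | succ n hn ih =>
    rw [show 2*(n+1) = 2*n+2 from by ring, recur n (by omega)]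
    have hp : (0:ℝ) < (36*(n:ℝ)+41)/(16*(36*(n:ℝ)+5)) := by positivity
    have hc : (0:ℝ) < (Nat.choose (4*n) (2*n) : ℝ) := by
      exact_mod_cast Nat.choose_pos (by omega : 2*n ≤ 4*n)
    have hq : (0:ℝ) < (3*(252*(n:ℝ)^3+435*(n:ℝ)^2+97*(n:ℝ)+7)
          /(16*(2*(n:ℝ)+1)*((n:ℝ)+1)*(36*(n:ℝ)+5)))
        * (Nat.choose (4*n) (2*n) : ℝ) / 4^n := by
      apply div_pos (mul_pos (by positivity) hc) (by positivity)
    nlinarith [mul_pos hp (neg_pos.mpr ih)]
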